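/- arXiv:2408.16591 — 7 statements merged into one kernel-verified Lean document; each statement's English description precedes it below -/
import Mathlib

section
/- Let V be an n×s real matrix with rank(V) ≤ r. Let p be an injective tuple of r row indices and q an injective tuple of r column indices such that the r×r intersection submatrix V(p,q) is invertible. Then V admits the exact skeleton (CUR) decomposition V = V(:,q) · V(p,q)⁻¹ · V(p,:). -/
open Matrix

/-- **Exact skeleton (CUR) decomposition.** If an `n × s` real matrix `V` has rank at most `r`,
and `p`, `q` are injective tuples of `r` row and column indices such that the `r × r`
intersection submatrix `V(p, q)` is invertible, then
`V = V(:, q) · V(p, q)⁻¹ · V(p, :)`. -/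
theorem cur_exact_skeleton_decomposition {n s r : ℕ}
    (V : Matrix (Fin n) (Fin s) ℝ)
    (p : Fin r → Fin n) (q : Fin r → Fin s)
    (hp : Function.Injective p) (hq : Function.Injective q)
    (hrank : V.rank ≤ r)
    (hinv : IsUnit (V.submatrix p q).det) :
    V = V.submatrix id q * (V.submatrix p q)⁻¹ * V.submatrix p id := by
  set A := V.submatrix p q with hA
  -- the selected columns, as vectors
  set f : Fin r → (Fin n → ℝ) := fun k => Vᵀ (q k) with hf
  have li : LinearIndependent ℝ f := by
    rw [Fintype.linearIndependent_iff]
    intro c hc k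
    have h0 : A.mulVec c = 0 := by
      funext i
      have := congrFun hc (p i)
      simpa [mulVec, dotProduct, f, A, mul_comm] using congrFun hc (p i)
    have := congrArg (fun v => A⁻¹.mulVec v) h0
    simp only [Matrix.mulVec_mulVec, Matrix.nonsing_inv_mul A hinv, Matrix.one_mulVec,
      Matrix.mulVec_zero] at this
    exact congrFun this k
  set N := Submodule.span ℝ (Set.range f) with hN
  set M := Submodule.span ℝ (Set.range Vᵀ) with hM
  have hle : N ≤ M := by
    apply Submodule.span_le.2
    rintro _ ⟨k, rfl⟩
    exact Submodule.subset_span ⟨q k, rfl⟩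
  have hNfin : Module.finrank ℝ N = r := by
    simpa using finrank_span_eq_card li
  have hMfin : Module.finrank ℝ M ≤ r := by
    rw [hM, show Vᵀ = V.col from rfl, ← V.rank_eq_finrank_span_cols]
    exact hrank
  have hNM : N = M := Submodule.eq_of_le_of_finrank_le hle (by omega)
  -- each column of V lies in N
  have hcol : ∀ j : Fin s, ∃ c : Fin r → ℝ, ∑ k, c k • f k = Vᵀ j := by
    intro j
    rw [← Submodule.mem_span_range_iff_exists_fun, ← hN, hNM]
    exact Submodule.subset_span ⟨j, rfl⟩
  choose c hc using hcol
  set B : Matrix (Fin r) (Fin s) ℝ := fun k j => c j k with hB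
  have hVB : V = V.submatrix id q * B := by
    ext i j
    have := congrFun (hc j) i
    simp only [f, transpose_apply, Finset.sum_apply, Pi.smul_apply, smul_eq_mul] at this
    rw [Matrix.mul_apply]
    simp [B, mul_comm, ← this]
  have hPB : V.submatrix p id = A * B := by
    ext i j
    have := congrFun (hc j) (p i)
    simp only [f, transpose_apply, Finset.sum_apply, Pi.smul_apply, smul_eq_mul] at this
    rw [Matrix.mul_apply]
    simp [A, B, mul_comm, ← this]
  rw [hPB, ← Matrix.mul_assoc, Matrix.mul_assoc (V.submatrix id q), Matrix.nonsing_inv_mul A hinv,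
    Matrix.mul_one, ← hVB]
end

section
/- Let V be an n×s real matrix, q an injective tuple of r column indices, and p an injective tuple of r row indices. Suppose V(:,q) = Q·R where Q is an n×r real matrix and R is an invertible r×r real matrix, and suppose the r×r submatrix Q(p,:) is invertible. Then the intersection submatrix V(p,q) is invertible and the stable CUR formula agrees with the CUR formula: Q · (Q(p,:))⁻¹ · V(p,:) = V(:,q) · V(p,q)⁻¹ · V(p,:). -/
open Matrix

/-- **Stable CUR agrees with CUR.** If `V(:, q) = Q · R` with `R` invertible and the `r × r`
row-submatrix `Q(p, :)` invertible, then the intersection submatrix `V(p, q)` is invertible and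
`Q · (Q(p, :))⁻¹ · V(p, :) = V(:, q) · V(p, q)⁻¹ · V(p, :)`. -/
theorem stable_cur_eq_cur {n s r : ℕ}
    (V : Matrix (Fin n) (Fin s) ℝ)
    (q : Fin r → Fin s) (p : Fin r → Fin n)
    (hq : Function.Injective q) (hp : Function.Injective p)
    (Q : Matrix (Fin n) (Fin r) ℝ) (R : Matrix (Fin r) (Fin r) ℝ)
    (hQR : V.submatrix id q = Q * R) (hR : IsUnit R.det)
    (hQp : IsUnit (Q.submatrix p id).det) :
    IsUnit (V.submatrix p q).det ∧
      Q * (Q.submatrix p id)⁻¹ * V.submatrix p id =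
        V.submatrix id q * (V.submatrix p q)⁻¹ * V.submatrix p id := by
  have hpq : V.submatrix p q = Q.submatrix p id * R := by
    have : V.submatrix p q = (V.submatrix id q).submatrix p id := rfl
    rw [this, hQR]
    ext i j
    simp [mul_apply]
  have hdet : IsUnit (V.submatrix p q).det := by
    rw [hpq, det_mul]; exact hQp.mul hR
  refine ⟨hdet, ?_⟩
  rw [hpq, Matrix.mul_inv_rev, hQR]
  rw [Matrix.mul_assoc Q R, ← Matrix.mul_assoc R R⁻¹, mul_nonsing_inv R hR,
    Matrix.one_mul]
end

section
/- Let V be an n×s real matrix and q an injective tuple of r column indices with V(:,q) = Q·R, where Q is an n×r real matrix and R is an invertible r×r real matrix. Let p be an injective tuple of m ≥ r row indices (row oversampling) such that the r×r matrix Q(p,:)ᵀ·Q(p,:) is invertible. Define the oversampled CUR approximation V̂ = Q · (Q(p,:)ᵀ·Q(p,:))⁻¹ · Q(p,:)ᵀ · V(p,:), i.e. V̂ = Q · Q(p,:)† · V(p,:) with the Moore–Penrose formula A† = (AᵀA)⁻¹Aᵀ. Then V̂ exactly reproduces the selected columns: V̂(:,q) = V(:,q). -/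
open Matrix

/-- **Oversampled CUR reproduces the selected columns.** Suppose `V(:, q) = Q · R` with `R`
invertible, and let `p` be an injective tuple of `m ≥ r` row indices such that the Gram matrix
`Q(p, :)ᵀ · Q(p, :)` is invertible. Then the oversampled CUR approximation
`V̂ = Q · (Q(p, :)ᵀ · Q(p, :))⁻¹ · Q(p, :)ᵀ · V(p, :)` (i.e. `V̂ = Q · Q(p, :)† · V(p, :)`)
satisfies `V̂(:, q) = V(:, q)`. -/
theorem oversampled_cur_reproduces_columns {n s r m : ℕ}
    (V : Matrix (Fin n) (Fin s) ℝ)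
    (q : Fin r → Fin s) (hq : Function.Injective q)
    (Q : Matrix (Fin n) (Fin r) ℝ) (R : Matrix (Fin r) (Fin r) ℝ)
    (hQR : V.submatrix id q = Q * R) (hR : IsUnit R.det)
    (p : Fin m → Fin n) (hp : Function.Injective p) (hm : r ≤ m)
    (hGram : IsUnit ((Q.submatrix p id)ᵀ * Q.submatrix p id).det)
    (Vhat : Matrix (Fin n) (Fin s) ℝ)
    (hVhat : Vhat =
      Q * ((Q.submatrix p id)ᵀ * Q.submatrix p id)⁻¹ * (Q.submatrix p id)ᵀ *
        V.submatrix p id) :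
    Vhat.submatrix id q = V.submatrix id q := by
  have key : V.submatrix p q = Q.submatrix p id * R := by
    have h := congrArg (fun M => M.submatrix p (id : Fin r → Fin r)) hQR
    exact (by simpa [Matrix.submatrix_submatrix] using h :
      V.submatrix p q = (Q * R).submatrix p id).trans
      (Matrix.submatrix_mul_equiv Q R p (Equiv.refl _) id).symm
  have hsub : Vhat.submatrix id q =
      Q * ((Q.submatrix p id)ᵀ * Q.submatrix p id)⁻¹ * (Q.submatrix p id)ᵀ *
        V.submatrix p q := by
    rw [hVhat]
    ext i j
    simp [Matrix.mul_apply, Matrix.submatrix]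
  rw [hsub, key, hQR, Matrix.mul_assoc, Matrix.mul_assoc,
    ← Matrix.mul_assoc ((Q.submatrix p id)ᵀ), ← Matrix.mul_assoc _ _ R,
    Matrix.nonsing_inv_mul _ hGram, Matrix.one_mul]
end

section
/- Let U be an n×r real matrix and Y an s×r real matrix with orthonormal columns (UᵀU = I_r, YᵀY = I_r), let Σ be an invertible r×r real matrix, and let F be an arbitrary n×s real matrix. Define the DLRA velocities Σ̇ = Uᵀ·F·Y, U̇ = (I_n − U·Uᵀ)·F·Y·Σ⁻¹, and Ẏ = (I_s − Y·Yᵀ)·Fᵀ·U·(Σᵀ)⁻¹. Then the induced velocity of the low-rank factorization equals the orthogonal projection of F onto the tangent space of the rank-r manifold at U·Σ·Yᵀ: U̇·Σ·Yᵀ + U·Σ̇·Yᵀ + U·Σ·Ẏᵀ = U·Uᵀ·F + F·Y·Yᵀ − U·Uᵀ·F·Y·Yᵀ. -/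
open Matrix

/-- **DLRA velocity is the tangent-space projection.** Let `U` (`n × r`) and `Y` (`s × r`) have
orthonormal columns, let `S` (`r × r`) be invertible, and let `F` be any `n × s` real matrix.
With `Ṡ = Uᵀ·F·Y`, `U̇ = (I − U·Uᵀ)·F·Y·S⁻¹`, `Ẏ = (I − Y·Yᵀ)·Fᵀ·U·(Sᵀ)⁻¹`, one has
`U̇·S·Yᵀ + U·Ṡ·Yᵀ + U·S·Ẏᵀ = U·Uᵀ·F + F·Y·Yᵀ − U·Uᵀ·F·Y·Yᵀ`, the orthogonal projection of `F`
onto the tangent space of the rank-`r` manifold at `U·S·Yᵀ`. -/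
theorem dlra_velocity_eq_tangent_projection {n s r : ℕ}
    (U : Matrix (Fin n) (Fin r) ℝ) (Y : Matrix (Fin s) (Fin r) ℝ)
    (S : Matrix (Fin r) (Fin r) ℝ) (F : Matrix (Fin n) (Fin s) ℝ)
    (hU : Uᵀ * U = 1) (hY : Yᵀ * Y = 1) (hS : IsUnit S.det)
    (Sdot : Matrix (Fin r) (Fin r) ℝ)
    (Udot : Matrix (Fin n) (Fin r) ℝ)
    (Ydot : Matrix (Fin s) (Fin r) ℝ)
    (hSdot : Sdot = Uᵀ * F * Y)
    (hUdot : Udot = (1 - U * Uᵀ) * F * Y * S⁻¹)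
    (hYdot : Ydot = (1 - Y * Yᵀ) * Fᵀ * U * (Sᵀ)⁻¹) :
    Udot * S * Yᵀ + U * Sdot * Yᵀ + U * S * Ydotᵀ =
      U * Uᵀ * F + F * Y * Yᵀ - U * Uᵀ * F * Y * Yᵀ := by
  have h1 : S⁻¹ * S = 1 := nonsing_inv_mul S hS
  have h2 : S * S⁻¹ = 1 := mul_nonsing_inv S hS
  have h1' : ∀ X : Matrix (Fin r) (Fin s) ℝ, S⁻¹ * (S * X) = X := fun X => by
    rw [← Matrix.mul_assoc, h1, Matrix.one_mul]
  have h2' : ∀ X : Matrix (Fin r) (Fin s) ℝ, S * (S⁻¹ * X) = X := fun X => by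
    rw [← Matrix.mul_assoc, h2, Matrix.one_mul]
  subst hSdot hUdot hYdot
  simp only [Matrix.transpose_mul, Matrix.transpose_sub, Matrix.transpose_one,
    Matrix.transpose_transpose, Matrix.transpose_nonsing_inv, Matrix.sub_mul, Matrix.mul_sub,
    Matrix.one_mul, Matrix.mul_one, Matrix.mul_assoc, h1', h2']
  abel
end

section
/- Let U be an n×r real matrix and Y an s×r real matrix with orthonormal columns (UᵀU = I_r, YᵀY = I_r), let Σ be an invertible r×r real matrix, and let F be an arbitrary n×s real matrix. Define Σ̇ = Uᵀ·F·Y, U̇ = (I_n − U·Uᵀ)·F·Y·Σ⁻¹, and Ẏ = (I_s − Y·Yᵀ)·Fᵀ·U·(Σᵀ)⁻¹. Then for every A ∈ ℝ^{n×r} with Uᵀ·A = 0, every B ∈ ℝ^{r×r}, and every C ∈ ℝ^{s×r} with Yᵀ·C = 0, the Frobenius-norm residual is minimized by the DLRA choice: ‖U̇·Σ·Yᵀ + U·Σ̇·Yᵀ + U·Σ·Ẏᵀ − F‖_F ≤ ‖A·Σ·Yᵀ + U·B·Yᵀ + U·Σ·Cᵀ − F‖_F. -/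
open Matrix

attribute [local instance] Matrix.frobeniusNormedAddCommGroup


lemma trace_sq_nonneg {n s : ℕ} (W : Matrix (Fin n) (Fin s) ℝ) :
    0 ≤ trace (Wᵀ * W) := by
  simp only [Matrix.trace, Matrix.diag, Matrix.mul_apply, Matrix.transpose_apply]
  exact Finset.sum_nonneg fun j _ => Finset.sum_nonneg fun i _ => mul_self_nonneg _

lemma frob_eq {n s : ℕ} (X : Matrix (Fin n) (Fin s) ℝ) :
    ‖X‖ = Real.sqrt (trace (Xᵀ * X)) := by
  rw [Matrix.frobenius_norm_def, Real.sqrt_eq_rpow]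
  congr 1
  simp only [Matrix.trace, Matrix.diag, Matrix.mul_apply, Matrix.transpose_apply]
  rw [Finset.sum_comm]
  congr 1; ext i; congr 1; ext j
  rw [Real.rpow_two, Real.norm_eq_abs, sq_abs, sq]

lemma frob_le {n s : ℕ} (X W : Matrix (Fin n) (Fin s) ℝ)
    (h : trace (Xᵀ * W) = 0) : ‖X‖ ≤ ‖X + W‖ := by
  rw [frob_eq, frob_eq]
  apply Real.sqrt_le_sqrt
  have hWX : trace (Wᵀ * X) = 0 := by
    rw [← Matrix.trace_transpose, Matrix.transpose_mul, Matrix.transpose_transpose, h]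
  have expand : (X + W)ᵀ * (X + W) = Xᵀ * X + Xᵀ * W + Wᵀ * X + Wᵀ * W := by
    rw [Matrix.transpose_add, Matrix.add_mul, Matrix.mul_add, Matrix.mul_add]; abel
  rw [expand, Matrix.trace_add, Matrix.trace_add, Matrix.trace_add, h, hWX]
  have := trace_sq_nonneg W
  linarith


/-- **DLRA minimizes the Frobenius-norm residual over the tangent space.** Let `U` (`n × r`) and
`Y` (`s × r`) have orthonormal columns, `S` (`r × r`) invertible, and `F` any `n × s` real
matrix. With the DLRA velocities `Ṡ = Uᵀ·F·Y`, `U̇ = (I − U·Uᵀ)·F·Y·S⁻¹`,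
`Ẏ = (I − Y·Yᵀ)·Fᵀ·U·(Sᵀ)⁻¹`, for every tangent direction `A·S·Yᵀ + U·B·Yᵀ + U·S·Cᵀ` with
`UᵀA = 0` and `YᵀC = 0` one has
`‖U̇·S·Yᵀ + U·Ṡ·Yᵀ + U·S·Ẏᵀ − F‖_F ≤ ‖A·S·Yᵀ + U·B·Yᵀ + U·S·Cᵀ − F‖_F`. -/
theorem dlra_minimizes_frobenius_residual {n s r : ℕ}
    (U : Matrix (Fin n) (Fin r) ℝ) (Y : Matrix (Fin s) (Fin r) ℝ)
    (S : Matrix (Fin r) (Fin r) ℝ) (F : Matrix (Fin n) (Fin s) ℝ)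
    (hU : Uᵀ * U = 1) (hY : Yᵀ * Y = 1) (hS : IsUnit S.det)
    (Sdot : Matrix (Fin r) (Fin r) ℝ)
    (Udot : Matrix (Fin n) (Fin r) ℝ)
    (Ydot : Matrix (Fin s) (Fin r) ℝ)
    (hSdot : Sdot = Uᵀ * F * Y)
    (hUdot : Udot = (1 - U * Uᵀ) * F * Y * S⁻¹)
    (hYdot : Ydot = (1 - Y * Yᵀ) * Fᵀ * U * (Sᵀ)⁻¹) :
    ∀ (A : Matrix (Fin n) (Fin r) ℝ) (B : Matrix (Fin r) (Fin r) ℝ)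
      (C : Matrix (Fin s) (Fin r) ℝ), Uᵀ * A = 0 → Yᵀ * C = 0 →
      ‖Udot * S * Yᵀ + U * Sdot * Yᵀ + U * S * Ydotᵀ - F‖ ≤
        ‖A * S * Yᵀ + U * B * Yᵀ + U * S * Cᵀ - F‖ := by
  intro A B C hA hC
  set P := U * Uᵀ with hPdef
  set Q := Y * Yᵀ with hQdef
  set X := P * F + F * Q - P * F * Q - F with hX
  set W := A * S * Yᵀ + U * B * Yᵀ + U * S * Cᵀ - F - X with hW
  -- LHS matrix equals X
  have e1 : Udot * S = (1 - P) * F * Y := by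
    rw [hUdot, Matrix.mul_assoc, Matrix.nonsing_inv_mul S hS, Matrix.mul_one]
  have hQT : Qᵀ = Q := by rw [hQdef, Matrix.transpose_mul, Matrix.transpose_transpose]
  have e2 : Ydotᵀ = S⁻¹ * (Uᵀ * (F * (1 - Q))) := by
    rw [hYdot]
    simp only [hQT, Matrix.transpose_mul, Matrix.transpose_sub, Matrix.transpose_one,
      Matrix.transpose_transpose, Matrix.transpose_nonsing_inv, Matrix.mul_assoc]
  have eL : Udot * S * Yᵀ + U * Sdot * Yᵀ + U * S * Ydotᵀ - F = X := by
    rw [e1, e2, hSdot, hX]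
    have hPF : ∀ (M : Matrix (Fin n) (Fin s) ℝ), U * (Uᵀ * M) = P * M := fun M => by
      rw [hPdef, Matrix.mul_assoc]
    have : U * S * (S⁻¹ * (Uᵀ * (F * (1 - Q)))) = P * (F * (1 - Q)) := by
      rw [Matrix.mul_assoc U S, ← Matrix.mul_assoc S, Matrix.mul_nonsing_inv S hS,
        Matrix.one_mul, hPF]
    rw [this]
    simp only [Matrix.sub_mul, Matrix.mul_sub, Matrix.one_mul, Matrix.mul_one,
      Matrix.mul_assoc, hPF]
    abel
  have eR : A * S * Yᵀ + U * B * Yᵀ + U * S * Cᵀ - F = X + W := by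
    rw [hW]; abel
  rw [eL, eR]
  apply frob_le
  -- key orthogonality
  have hUA : ∀ {m : ℕ} (M : Matrix (Fin r) (Fin m) ℝ), Uᵀ * (A * M) = 0 := fun M => by
    rw [← Matrix.mul_assoc, hA, Matrix.zero_mul]
  have hUU : ∀ {m : ℕ} (M : Matrix (Fin r) (Fin m) ℝ), Uᵀ * (U * M) = M := fun M => by
    rw [← Matrix.mul_assoc, hU, Matrix.one_mul]
  have hYY : ∀ {m : ℕ} (M : Matrix (Fin r) (Fin m) ℝ), Yᵀ * (Y * M) = M := fun M => by
    rw [← Matrix.mul_assoc, hY, Matrix.one_mul]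
  have hCY : ∀ {m : ℕ} (M : Matrix (Fin r) (Fin m) ℝ), Cᵀ * (Y * M) = 0 := fun M => by
    have : Cᵀ * Y = 0 := by
      have := congrArg Matrix.transpose hC
      simpa using this
    rw [← Matrix.mul_assoc, this, Matrix.zero_mul]
  have hCY0 : Cᵀ * Y = 0 := by
    have := congrArg Matrix.transpose hC; simpa using this
  have hK : (1 - P) * W * (1 - Q) = 0 := by
    rw [hW, hX, hPdef, hQdef]
    simp only [Matrix.sub_mul, Matrix.mul_sub, Matrix.add_mul, Matrix.mul_add,
      Matrix.one_mul, Matrix.mul_one, Matrix.mul_assoc, hUA, hUU, hYY, hCY, hCY0, hA, hU, hY,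
      Matrix.mul_zero, Matrix.zero_mul]
    abel
  have hXT : Xᵀ = -((1 - Q) * (Fᵀ * (1 - P))) := by
    rw [hX]
    have hPT : Pᵀ = P := by rw [hPdef, Matrix.transpose_mul, Matrix.transpose_transpose]
    have hQT : Qᵀ = Q := by rw [hQdef, Matrix.transpose_mul, Matrix.transpose_transpose]
    simp only [Matrix.transpose_sub, Matrix.transpose_add, Matrix.transpose_mul, hPT, hQT,
      Matrix.mul_sub, Matrix.sub_mul, Matrix.mul_one, Matrix.one_mul, Matrix.mul_assoc]
    abel
  rw [hXT, Matrix.neg_mul, Matrix.trace_neg, Matrix.mul_assoc, Matrix.trace_mul_comm,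
    Matrix.mul_assoc (Fᵀ * (1 - P)) W (1 - Q), Matrix.mul_assoc Fᵀ (1 - P) (W * (1 - Q)),
    ← Matrix.mul_assoc (1 - P) W (1 - Q), hK, Matrix.mul_zero, Matrix.trace_zero, neg_zero]
end

section
/- Let V be an n×s real matrix with singular value decomposition V = U_f·Σ·Y_fᵀ, where U_f is an n×n orthogonal matrix, Y_f is an s×s orthogonal matrix, and Σ is an n×s matrix whose off-diagonal entries vanish and whose diagonal entries σ₁ ≥ σ₂ ≥ … ≥ 0 are nonincreasing and nonnegative. For r ≤ min(n,s), let V_r = U_f·Σ_r·Y_fᵀ denote the rank-r truncated SVD, where Σ_r agrees with Σ in its first r diagonal entries and is zero elsewhere. Then V_r is an optimal rank-r approximation in the Frobenius norm: for every n×s real matrix B with rank(B) ≤ r, ‖V − V_r‖_F ≤ ‖V − B‖_F. -/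
open Matrix

attribute [local instance] Matrix.frobeniusNormedAddCommGroup


open Finset

lemma aux_key {d n : ℕ} (q : Fin d → Fin n → ℝ)
    (hq : ∀ k l, ∑ i, q k i * q l i = if k = l then (1:ℝ) else 0)
    (β : Fin d → ℝ) (a : Fin n → ℝ) :
    ∑ i, (a i - ∑ k, β k * q k i)^2
      = ∑ i, (a i)^2 - ∑ k, (∑ i, q k i * a i)^2
        + ∑ k, (β k - ∑ i, q k i * a i)^2 := by
  have h2 : ∑ i, a i * (∑ k, β k * q k i) = ∑ k, β k * (∑ i, q k i * a i) := by
    simp_rw [Finset.mul_sum]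
    rw [Finset.sum_comm]
    refine Finset.sum_congr rfl fun k _ => Finset.sum_congr rfl fun i _ => by ring
  have h3 : ∑ i, (∑ k, β k * q k i)^2 = ∑ k, (β k)^2 := by
    have e : ∀ i : Fin n, (∑ k, β k * q k i)^2
        = ∑ k, ∑ l, (β k * β l) * (q k i * q l i) := by
      intro i
      rw [sq, Finset.sum_mul_sum]
      exact Finset.sum_congr rfl fun k _ => Finset.sum_congr rfl fun l _ => by ring
    simp_rw [e]
    rw [Finset.sum_comm]
    have e2 : ∀ k, ∑ i, ∑ l, (β k * β l) * (q k i * q l i)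
        = ∑ l, (β k * β l) * (∑ i, q k i * q l i) := by
      intro k
      rw [Finset.sum_comm]
      exact Finset.sum_congr rfl fun l _ => by rw [Finset.mul_sum]
    simp_rw [e2, hq]
    simp [sq]
  have expand : ∀ i : Fin n, (a i - ∑ k, β k * q k i)^2
      = (a i)^2 - 2 * (a i * (∑ k, β k * q k i)) + (∑ k, β k * q k i)^2 := by
    intro i; ring
  simp_rw [expand]
  rw [Finset.sum_add_distrib, Finset.sum_sub_distrib, ← Finset.mul_sum, h2, h3]
  have : ∑ k, (β k - ∑ i, q k i * a i)^2
      = ∑ k, ((β k)^2 - 2 * (β k * (∑ i, q k i * a i)) + (∑ i, q k i * a i)^2) := by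
    exact Finset.sum_congr rfl fun k _ => by ring
  rw [this, Finset.sum_add_distrib, Finset.sum_sub_distrib, ← Finset.mul_sum]
  ring

open Finset

lemma aux_abel (n r : ℕ) (hr : r ≤ n) (g p : ℕ → ℝ)
    (hg0 : ∀ i, 0 ≤ g i)
    (hmono : ∀ i j, i ≤ j → j < n → g j ≤ g i)
    (hp0 : ∀ i, 0 ≤ p i) (hp1 : ∀ i, p i ≤ 1)
    (hps : ∑ i ∈ range n, p i ≤ r) :
    ∑ i ∈ range n, g i * p i ≤ ∑ i ∈ range r, g i := by
  rcases eq_or_lt_of_le hr with h | h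
  · subst h
    exact Finset.sum_le_sum fun i _ => by nlinarith [hg0 i, hp1 i, hp0 i]
  · set c := g r with hc
    have hc0 : 0 ≤ c := hg0 r
    have hsum : ∀ f : ℕ → ℝ, ∑ i ∈ range n, f i
        = ∑ i ∈ range r, f i + ∑ i ∈ range n \ range r, f i := by
      intro f
      rw [← Finset.sum_union Finset.disjoint_sdiff,
        Finset.union_sdiff_of_subset (Finset.range_subset_range.2 hr)]
    rw [hsum]
    have hub : ∑ i ∈ range n \ range r, g i * p i ≤ c * ∑ i ∈ range n \ range r, p i := by
      rw [Finset.mul_sum]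
      refine Finset.sum_le_sum fun i hi => ?_
      simp only [Finset.mem_sdiff, Finset.mem_range, not_lt] at hi
      exact mul_le_mul_of_nonneg_right (hmono r i hi.2 hi.1) (hp0 i)
    have htail : ∑ i ∈ range n \ range r, p i ≤ (r : ℝ) - ∑ i ∈ range r, p i := by
      have := hsum p; linarith
    have key : c * ∑ i ∈ range n \ range r, p i ≤ ∑ i ∈ range r, c * (1 - p i) := by
      have e : ∑ i ∈ range r, c * (1 - p i) = c * ((r : ℝ) - ∑ i ∈ range r, p i) := by
        rw [mul_sub, Finset.mul_sum]
        rw [show ∀ x : ℝ, c * (x : ℝ) = c * x from fun _ => rfl]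
        have : (c * (r:ℝ)) = ∑ _i ∈ range r, c := by
          rw [Finset.sum_const, Finset.card_range, nsmul_eq_mul]; ring
        rw [this, ← Finset.sum_sub_distrib]
        exact Finset.sum_congr rfl fun i _ => by ring
      rw [e]
      exact mul_le_mul_of_nonneg_left htail hc0
    have final : ∑ i ∈ range r, (g i * p i + c * (1 - p i)) ≤ ∑ i ∈ range r, g i := by
      refine Finset.sum_le_sum fun i hi => ?_
      simp only [Finset.mem_range] at hi
      have h1 : c ≤ g i := hmono i r hi.le h
      nlinarith [hp0 i, hp1 i]
    calc ∑ i ∈ range r, g i * p i + ∑ i ∈ range n \ range r, g i * p i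
        ≤ ∑ i ∈ range r, g i * p i + ∑ i ∈ range r, c * (1 - p i) := by linarith
      _ = ∑ i ∈ range r, (g i * p i + c * (1 - p i)) := by rw [Finset.sum_add_distrib]
      _ ≤ ∑ i ∈ range r, g i := final

open Matrix Finset

lemma aux_basis {n s r : ℕ} (C : Matrix (Fin n) (Fin s) ℝ) (hrank : C.rank ≤ r) :
    ∃ (d : ℕ) (q : Fin d → Fin n → ℝ) (β : Fin s → Fin d → ℝ),
      d ≤ r ∧ (∀ k l, ∑ i, q k i * q l i = if k = l then (1:ℝ) else 0) ∧
      (∀ i j, C i j = ∑ k, β j k * q k i) := by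
  classical
  set E := EuclideanSpace ℝ (Fin n)
  set e : (Fin n → ℝ) ≃ₗ[ℝ] E := (WithLp.linearEquiv 2 ℝ (Fin n → ℝ)).symm with he
  set W0 : Submodule ℝ (Fin n → ℝ) := Submodule.span ℝ (Set.range Cᵀ) with hW0
  set W : Submodule ℝ E := W0.map e.toLinearMap with hW
  have hfr : Module.finrank ℝ W = C.rank := by
    rw [hW, LinearEquiv.finrank_map_eq, hW0, Matrix.rank_eq_finrank_span_cols]
    rfl
  set d := Module.finrank ℝ W with hd
  have hdr : d ≤ r := by rw [show d = C.rank from hfr]; exact hrank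
  have : Fact (Module.finrank ℝ W = d) := ⟨rfl⟩
  let b : OrthonormalBasis (Fin d) ℝ W := stdOrthonormalBasis ℝ W
  set q : Fin d → Fin n → ℝ := fun k => WithLp.equiv 2 (Fin n → ℝ) ((b k : E)) with hq
  have hon : Orthonormal ℝ (fun k => (b k : E)) :=
    b.orthonormal.comp_linearIsometry W.subtypeₗᵢ
  have hqon : ∀ k l, ∑ i, q k i * q l i = if k = l then (1:ℝ) else 0 := by
    intro k l
    have := orthonormal_iff_ite.mp hon k l
    rw [PiLp.inner_apply] at this
    simp [RCLike.inner_apply, conj_trivial] at this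
    rw [← this]
    exact Finset.sum_congr rfl fun i _ => mul_comm _ _
  have hmem : ∀ j : Fin s, e (Cᵀ j) ∈ W := by
    intro j
    exact Submodule.mem_map_of_mem (Submodule.subset_span (Set.mem_range_self j))
  set w : Fin s → W := fun j => ⟨e (Cᵀ j), hmem j⟩ with hw
  refine ⟨d, q, fun j k => b.repr (w j) k, hdr, hqon, ?_⟩
  intro i j
  have hrepr := b.sum_repr (w j)
  have hcoe : ((∑ k, b.repr (w j) k • b k : W) : E) = e (Cᵀ j) := by
    rw [hrepr]
  rw [Submodule.coe_sum] at hcoe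
  have : ∀ k, ((b.repr (w j) k • b k : W) : E) = b.repr (w j) k • (b k : E) := fun k => rfl
  simp_rw [this] at hcoe
  have happ := congrArg (fun x => WithLp.equiv 2 (Fin n → ℝ) x i) hcoe
  beta_reduce at happ
  rw [show WithLp.equiv 2 (Fin n → ℝ) (e (Cᵀ j)) = Cᵀ j from rfl] at happ
  rw [show (WithLp.equiv 2 (Fin n → ℝ) (∑ k, b.repr (w j) k • (b k : E))) i
      = ∑ k, b.repr (w j) k • (q k i) from by
    rw [show WithLp.equiv 2 (Fin n → ℝ) (∑ k, b.repr (w j) k • (b k : E))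
        = ∑ k, b.repr (w j) k • q k from
      (map_sum (WithLp.linearEquiv 2 ℝ (Fin n → ℝ)) (fun k => b.repr (w j) k • (b k : E))
        Finset.univ).trans (Finset.sum_congr rfl fun k _ => map_smul _ _ _)]
    simp [Finset.sum_apply]] at happ
  simp only [smul_eq_mul] at happ
  rw [show C i j = Cᵀ j i from rfl, ← happ]
lemma aux_core {n s : ℕ} (r : ℕ) (hr : r ≤ min n s) (S C : Matrix (Fin n) (Fin s) ℝ)
    (hoff : ∀ (i : Fin n) (j : Fin s), (i : ℕ) ≠ (j : ℕ) → S i j = 0)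
    (hnonneg : ∀ (i : Fin n) (j : Fin s), (i : ℕ) = (j : ℕ) → 0 ≤ S i j)
    (hmono : ∀ (i i' : Fin n) (j j' : Fin s), (i : ℕ) = (j : ℕ) → (i' : ℕ) = (j' : ℕ) →
      (i : ℕ) ≤ (i' : ℕ) → S i' j' ≤ S i j)
    (hrank : C.rank ≤ r)
    (σ2 : ℕ → ℝ)
    (hσ2 : ∀ t, σ2 t = if h : t < n ∧ t < s then (S ⟨t, h.1⟩ ⟨t, h.2⟩)^2 else 0) :
    (∑ j, ∑ i, (S i j)^2) - ∑ t ∈ Finset.range r, σ2 t ≤ ∑ j, ∑ i, (S i j - C i j)^2 := by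
  classical
  obtain ⟨d, q, β, hdr, hqon, hC⟩ := aux_basis C hrank
  -- the inner products of q with columns of S
  have hα : ∀ (j : Fin s) (k : Fin d), (∑ i, q k i * S i j)
      = if h : (j:ℕ) < n then q k ⟨j, h⟩ * S ⟨j, h⟩ j else 0 := by
    intro j k
    split_ifs with h
    · refine Finset.sum_eq_single (⟨(j:ℕ), h⟩ : Fin n) (fun i _ hne => ?_)
        (fun hni => absurd (Finset.mem_univ _) hni)
      have : (i:ℕ) ≠ (j:ℕ) := fun hv => hne (Fin.ext hv)
      rw [hoff i j this, mul_zero]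
    · refine Finset.sum_eq_zero fun i _ => ?_
      have : (i:ℕ) ≠ (j:ℕ) := by omega
      rw [hoff i j this, mul_zero]
  obtain ⟨p, hpdef⟩ : ∃ p : ℕ → ℝ, ∀ t, p t = if h : t < n then ∑ k, (q k ⟨t, h⟩)^2 else 0 :=
    ⟨_, fun t => rfl⟩
  -- per-column sum of squared inner products
  have hcol2 : ∀ j : Fin s, (∑ k, (∑ i, q k i * S i j)^2) = σ2 (j:ℕ) * p (j:ℕ) := by
    intro j
    by_cases h : (j:ℕ) < n
    · have hjs : (j:ℕ) < s := j.isLt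
      rw [hσ2, hpdef, dif_pos ⟨h, hjs⟩, dif_pos h]
      have : ∀ k : Fin d, (∑ i, q k i * S i j)^2 = (S ⟨j, h⟩ ⟨j, hjs⟩)^2 * (q k ⟨j, h⟩)^2 := by
        intro k
        rw [hα j k, dif_pos h]
        have : (⟨(j:ℕ), hjs⟩ : Fin s) = j := Fin.ext rfl
        rw [this]; ring
      simp_rw [this]
      rw [← Finset.mul_sum]
    · rw [hσ2, hpdef, dif_neg (by omega), dif_neg h, zero_mul]
      refine Finset.sum_eq_zero fun k _ => ?_
      rw [hα j k, dif_neg h]; ring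
  -- per column lower bound
  have hcol : ∀ j : Fin s, (∑ i, (S i j)^2) - σ2 (j:ℕ) * p (j:ℕ) ≤ ∑ i, (S i j - C i j)^2 := by
    intro j
    have hkey := aux_key q hqon (β j) (fun i => S i j)
    have hCc : ∀ i, S i j - C i j = S i j - ∑ k, β j k * q k i := by
      intro i; rw [hC i j]
    simp_rw [hCc]
    rw [hkey, ← hcol2 j]
    have : 0 ≤ ∑ k, (β j k - ∑ i, q k i * S i j)^2 :=
      Finset.sum_nonneg fun k _ => sq_nonneg _
    linarith
  -- sum over columns
  have hsum : (∑ j : Fin s, ∑ i, (S i j)^2) - (∑ j : Fin s, σ2 (j:ℕ) * p (j:ℕ))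
      ≤ ∑ j : Fin s, ∑ i, (S i j - C i j)^2 := by
    rw [← Finset.sum_sub_distrib]
    exact Finset.sum_le_sum fun j _ => hcol j
  -- reindex:  ∑_{j : Fin s} σ2 j * p j = ∑_{t ∈ range n} σ2 t * p t
  have hzero : ∀ t, ¬ (t < n ∧ t < s) → σ2 t * p t = 0 := by
    intro t ht
    by_cases h : t < n
    · rw [hσ2, dif_neg (by tauto), zero_mul]
    · rw [hpdef]; simp only [dif_neg h, mul_zero]
  have hmin : ∀ m : ℕ, min n s ≤ m → ∑ t ∈ range (min n s), σ2 t * p t = ∑ t ∈ range m, σ2 t * p t := by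
    intro m hm
    refine Finset.sum_subset (Finset.range_subset_range.2 hm) fun t ht hnt => ?_
    simp only [Finset.mem_range] at ht hnt
    exact hzero t (by omega)
  have hre : ∑ j : Fin s, σ2 (j:ℕ) * p (j:ℕ) = ∑ t ∈ range n, σ2 t * p t := by
    rw [Fin.sum_univ_eq_sum_range (fun t => σ2 t * p t) s, ← hmin s (min_le_right n s),
      hmin n (min_le_left n s)]
  -- apply Abel
  have habel : ∑ t ∈ range n, σ2 t * p t ≤ ∑ t ∈ range r, σ2 t := by
    refine aux_abel n r (le_trans hr (min_le_left n s)) σ2 p ?_ ?_ ?_ ?_ ?_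
    · intro t; rw [hσ2]; split_ifs; exacts [sq_nonneg _, le_refl 0]
    · intro i j hij hjn
      rw [hσ2 i, hσ2 j]
      split_ifs with h1 h2 h2
      · refine pow_le_pow_left₀ (hnonneg _ _ rfl) ?_ 2
        exact hmono ⟨i, h2.1⟩ ⟨j, h1.1⟩ ⟨i, h2.2⟩ ⟨j, h1.2⟩ rfl rfl hij
      · exact absurd ⟨lt_of_le_of_lt hij h1.1, lt_of_le_of_lt hij h1.2⟩ h2
      · exact sq_nonneg _
      · exact le_refl 0
    · intro t; rw [hpdef]; split_ifs
      exacts [Finset.sum_nonneg fun k _ => sq_nonneg _, le_refl 0]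
    · -- Bessel
      intro t
      rw [hpdef]
      split_ifs with h
      · set a : Fin n → ℝ := fun i => if i = ⟨t, h⟩ then 1 else 0 with ha
        have hkey := aux_key q hqon (fun k => q k ⟨t, h⟩) a
        have h1 : ∑ i, (a i)^2 = 1 := by
          rw [ha]; simp [apply_ite (· ^ 2)]
        have h2 : ∀ k, (∑ i, q k i * a i) = q k ⟨t, h⟩ := by
          intro k; rw [ha]; simp [mul_ite]
        simp_rw [h2, h1] at hkey
        have h3 : 0 ≤ ∑ i, (a i - ∑ k, q k ⟨t, h⟩ * q k i)^2 :=
          Finset.sum_nonneg fun i _ => sq_nonneg _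
        rw [hkey] at h3
        simp only [sub_self] at h3
        have : ∑ k : Fin d, (0:ℝ)^2 = 0 := by simp
        rw [this] at h3
        linarith
      · exact zero_le_one
    · -- total sum of p over range n equals d ≤ r
      have : ∑ t ∈ range n, p t = ∑ i : Fin n, ∑ k, (q k i)^2 := by
        rw [← Fin.sum_univ_eq_sum_range (fun t => p t) n]
        refine Finset.sum_congr rfl fun i _ => ?_
        rw [hpdef]; rw [dif_pos i.isLt]
      rw [this, Finset.sum_comm]
      have : ∀ k : Fin d, ∑ i, (q k i)^2 = 1 := by
        intro k
        have := hqon k k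
        rw [if_pos rfl] at this
        rw [← this]
        exact Finset.sum_congr rfl fun i _ => sq (q k i)
      simp_rw [this]
      simp only [Finset.sum_const, Finset.card_univ, Fintype.card_fin, nsmul_eq_mul, mul_one]
      exact_mod_cast hdr
  calc (∑ j : Fin s, ∑ i, (S i j)^2) - ∑ t ∈ Finset.range r, σ2 t
      ≤ (∑ j : Fin s, ∑ i, (S i j)^2) - ∑ t ∈ range n, σ2 t * p t := by linarith
    _ = (∑ j : Fin s, ∑ i, (S i j)^2) - (∑ j : Fin s, σ2 (j:ℕ) * p (j:ℕ)) := by rw [hre]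
    _ ≤ ∑ j : Fin s, ∑ i, (S i j - C i j)^2 := hsum

open Finset

lemma aux_trace' {n s : ℕ} (A : Matrix (Fin n) (Fin s) ℝ) :
    Matrix.trace (Aᵀ * A) = ∑ j, ∑ i, (A i j)^2 := by
  simp [Matrix.trace, Matrix.mul_apply, Matrix.diag, sq]

lemma aux_inv {n s : ℕ} (U : Matrix (Fin n) (Fin n) ℝ) (Y : Matrix (Fin s) (Fin s) ℝ)
    (M : Matrix (Fin n) (Fin s) ℝ) (hU : Uᵀ * U = 1) (hY : Yᵀ * Y = 1) :
    ∑ j, ∑ i, ((U * M * Yᵀ) i j)^2 = ∑ j, ∑ i, (M i j)^2 := by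
  rw [← aux_trace', ← aux_trace']
  have e : (U * M * Yᵀ)ᵀ * (U * M * Yᵀ) = Y * (Mᵀ * M) * Yᵀ := by
    rw [Matrix.transpose_mul, Matrix.transpose_mul, Matrix.transpose_transpose]
    calc Y * (Mᵀ * Uᵀ) * (U * M * Yᵀ) = Y * Mᵀ * (Uᵀ * U) * M * Yᵀ := by
          simp only [Matrix.mul_assoc]
      _ = Y * (Mᵀ * M) * Yᵀ := by rw [hU]; simp only [Matrix.mul_one, Matrix.mul_assoc]
  rw [e, Matrix.trace_mul_comm, ← Matrix.mul_assoc, ← Matrix.mul_assoc, hY, Matrix.one_mul]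

/-- **Eckart–Young theorem (Frobenius norm).** Let `V = U_f · S · Y_fᵀ` be an SVD of the
`n × s` real matrix `V` (so `U_f`, `Y_f` orthogonal, `S` with zero off-diagonal entries and
nonincreasing nonnegative diagonal entries). For `r ≤ min n s`, let `V_r = U_f · S_r · Y_fᵀ`
where `S_r` agrees with `S` in its first `r` diagonal entries and vanishes elsewhere. Then for
every `n × s` real matrix `B` of rank at most `r`, `‖V − V_r‖_F ≤ ‖V − B‖_F`. -/
theorem truncated_svd_optimal_frobenius {n s : ℕ}
    (V : Matrix (Fin n) (Fin s) ℝ)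
    (Uf : Matrix (Fin n) (Fin n) ℝ) (Yf : Matrix (Fin s) (Fin s) ℝ)
    (S : Matrix (Fin n) (Fin s) ℝ)
    (hUf : Ufᵀ * Uf = 1) (hYf : Yfᵀ * Yf = 1)
    (hSVD : V = Uf * S * Yfᵀ)
    (hoff : ∀ (i : Fin n) (j : Fin s), (i : ℕ) ≠ (j : ℕ) → S i j = 0)
    (hnonneg : ∀ (i : Fin n) (j : Fin s), (i : ℕ) = (j : ℕ) → 0 ≤ S i j)
    (hmono : ∀ (i i' : Fin n) (j j' : Fin s), (i : ℕ) = (j : ℕ) → (i' : ℕ) = (j' : ℕ) →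
      (i : ℕ) ≤ (i' : ℕ) → S i' j' ≤ S i j)
    (r : ℕ) (hr : r ≤ min n s)
    (Sr : Matrix (Fin n) (Fin s) ℝ)
    (hSr : Sr = Matrix.of fun (i : Fin n) (j : Fin s) =>
      if (i : ℕ) = (j : ℕ) ∧ (i : ℕ) < r then S i j else 0)
    (Vr : Matrix (Fin n) (Fin s) ℝ) (hVr : Vr = Uf * Sr * Yfᵀ) :
    ∀ B : Matrix (Fin n) (Fin s) ℝ, B.rank ≤ r → ‖V - Vr‖ ≤ ‖V - B‖ := by
  classical
  intro B hB
  have hUU : Uf * Ufᵀ = 1 := mul_eq_one_comm.mp hUf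
  have hYY : Yf * Yfᵀ = 1 := mul_eq_one_comm.mp hYf
  set C : Matrix (Fin n) (Fin s) ℝ := Ufᵀ * B * Yf with hCdef
  have hrankC : C.rank ≤ r :=
    le_trans (le_trans (Matrix.rank_mul_le_left (Ufᵀ * B) Yf)
      (Matrix.rank_mul_le_right Ufᵀ B)) hB
  have h1 : V - Vr = Uf * (S - Sr) * Yfᵀ := by
    rw [hSVD, hVr, Matrix.mul_sub, Matrix.sub_mul]
  have h2 : V - B = Uf * (S - C) * Yfᵀ := by
    rw [hSVD, Matrix.mul_sub, Matrix.sub_mul]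
    congr 1
    rw [hCdef]
    rw [show Uf * (Ufᵀ * B * Yf) * Yfᵀ = (Uf * Ufᵀ) * (B * (Yf * Yfᵀ)) from by
      simp only [Matrix.mul_assoc], hUU, hYY, Matrix.one_mul, Matrix.mul_one]
  -- reduce norms to sums of squares
  have hnorm : ∀ X Y : Matrix (Fin n) (Fin s) ℝ,
      (∑ j, ∑ i, (X i j)^2) ≤ (∑ j, ∑ i, (Y i j)^2) → ‖X‖ ≤ ‖Y‖ := by
    intro X Y hXY
    rw [Matrix.frobenius_norm_def, Matrix.frobenius_norm_def]
    have conv : ∀ Z : Matrix (Fin n) (Fin s) ℝ,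
        (∑ i, ∑ j, ‖Z i j‖ ^ (2:ℝ)) = ∑ j, ∑ i, (Z i j)^2 := by
      intro Z
      rw [Finset.sum_comm]
      refine Finset.sum_congr rfl fun j _ => Finset.sum_congr rfl fun i _ => ?_
      rw [show (2:ℝ) = ((2:ℕ):ℝ) by norm_num, Real.rpow_natCast]
      rw [Real.norm_eq_abs, sq_abs]
    rw [conv, conv]
    refine Real.rpow_le_rpow ?_ hXY (by norm_num)
    exact Finset.sum_nonneg fun j _ => Finset.sum_nonneg fun i _ => sq_nonneg _
  rw [h1, h2]
  apply hnorm
  rw [aux_inv Uf Yf _ hUf hYf, aux_inv Uf Yf _ hUf hYf]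
  -- the singular values squared
  obtain ⟨σ2, hσ2⟩ : ∃ σ2 : ℕ → ℝ, ∀ t, σ2 t
      = if h : t < n ∧ t < s then (S ⟨t, h.1⟩ ⟨t, h.2⟩)^2 else 0 := ⟨_, fun t => rfl⟩
  have hSrdef : ∀ (i : Fin n) (j : Fin s),
      Sr i j = if (i:ℕ) = (j:ℕ) ∧ (i:ℕ) < r then S i j else 0 := by
    intro i j; rw [hSr]; rfl
  -- G (S - Sr) = G S - ∑_{t<r} σ2 t
  have hptwise : ∀ (i : Fin n) (j : Fin s), ((S - Sr) i j)^2 = (S i j)^2 - (Sr i j)^2 := by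
    intro i j
    rw [Matrix.sub_apply, hSrdef i j]
    split_ifs <;> ring
  have hGSr : (∑ j, ∑ i, (Sr i j)^2) = ∑ t ∈ Finset.range r, σ2 t := by
    have inner : ∀ j : Fin s, (∑ i, (Sr i j)^2) = if (j:ℕ) < r then σ2 (j:ℕ) else 0 := by
      intro j
      split_ifs with h
      · have hjn : (j:ℕ) < n := lt_of_lt_of_le h (le_trans hr (min_le_left n s))
        have e1 : ∑ i, (Sr i j)^2 = (Sr ⟨(j:ℕ), hjn⟩ j)^2 :=
          Finset.sum_eq_single (⟨(j:ℕ), hjn⟩ : Fin n)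
            (fun i _ hne => by
              rw [hSrdef, if_neg (fun hc => hne (Fin.ext hc.1))]; ring)
            (fun hni => absurd (Finset.mem_univ _) hni)
        rw [e1, hSrdef, if_pos ⟨rfl, h⟩, hσ2, dif_pos ⟨hjn, j.isLt⟩]
      · refine Finset.sum_eq_zero fun i _ => ?_
        rw [hSrdef, if_neg (fun hc : (i:ℕ) = (j:ℕ) ∧ (i:ℕ) < r => h (hc.1 ▸ hc.2))]
        ring
    simp_rw [inner]
    rw [Fin.sum_univ_eq_sum_range (fun t => if t < r then σ2 t else 0) s,
      ← Finset.sum_filter]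
    congr 1
    ext t
    simp only [Finset.mem_filter, Finset.mem_range]
    have hrs : r ≤ s := le_trans hr (min_le_right n s)
    omega
  have hGsub : (∑ j, ∑ i, ((S - Sr) i j)^2)
      = (∑ j, ∑ i, (S i j)^2) - ∑ t ∈ Finset.range r, σ2 t := by
    simp_rw [hptwise]
    rw [← hGSr]
    rw [← Finset.sum_sub_distrib]
    exact Finset.sum_congr rfl fun j _ => by rw [Finset.sum_sub_distrib]
  rw [hGsub]
  have : ∀ (i : Fin n) (j : Fin s), (S - C) i j = S i j - C i j := fun i j => rfl
  simp_rw [this]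
  exact aux_core r hr S C hoff hnonneg hmono hrankC σ2 hσ2
end

section
/- Let V be an n×s real matrix with singular value decomposition V = U_f·Σ·Y_fᵀ, where U_f is an n×n orthogonal matrix, Y_f is an s×s orthogonal matrix, and Σ is an n×s matrix whose off-diagonal entries vanish and whose diagonal entries σ₁ ≥ σ₂ ≥ … ≥ 0 are nonincreasing and nonnegative. Fix r < min(n,s). Then σ_{r+1} is the minimal error achievable by any rank-r approximation in the spectral norm: for every n×s real matrix B with rank(B) ≤ r, ‖V − B‖₂ ≥ σ_{r+1}. -/
open Matrix
open scoped Matrix.Norms.L2Operator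

private lemma orth_mulVec_norm {k : ℕ} (Q : Matrix (Fin k) (Fin k) ℝ) (hQ : Qᵀ * Q = 1)
    (x : Fin k → ℝ) :
    ‖(EuclideanSpace.equiv (Fin k) ℝ).symm (Q *ᵥ x)‖ =
      ‖(EuclideanSpace.equiv (Fin k) ℝ).symm x‖ := by
  have hq : (Q *ᵥ x) ᵥ* Q = x := by
    rw [← Matrix.vecMul_transpose, Matrix.vecMul_vecMul, hQ, Matrix.vecMul_one]
  have hdot : (Q *ᵥ x) ⬝ᵥ (Q *ᵥ x) = x ⬝ᵥ x := by
    rw [dotProduct_mulVec, hq]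
  rw [EuclideanSpace.norm_eq, EuclideanSpace.norm_eq]
  congr 1
  simpa [dotProduct, Real.norm_eq_abs, sq_abs, pow_two] using hdot

/-- **Eckart–Young lower bound (spectral norm).** Let `V = U_f · S · Y_fᵀ` be an SVD of the
`n × s` real matrix `V` (so `U_f`, `Y_f` orthogonal, `S` with zero off-diagonal entries and
nonincreasing nonnegative diagonal entries `σ₁ ≥ σ₂ ≥ … ≥ 0`). Fix `r < min n s`. Then for
every `n × s` real matrix `B` of rank at most `r`, `‖V − B‖₂ ≥ σ_{r+1}` (zero-indexed: the
diagonal entry of `S` in position `r`). -/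
theorem spectral_norm_rank_r_approx_lower_bound {n s : ℕ}
    (V : Matrix (Fin n) (Fin s) ℝ)
    (Uf : Matrix (Fin n) (Fin n) ℝ) (Yf : Matrix (Fin s) (Fin s) ℝ)
    (S : Matrix (Fin n) (Fin s) ℝ)
    (hUf : Ufᵀ * Uf = 1) (hYf : Yfᵀ * Yf = 1)
    (hSVD : V = Uf * S * Yfᵀ)
    (hoff : ∀ (i : Fin n) (j : Fin s), (i : ℕ) ≠ (j : ℕ) → S i j = 0)
    (hnonneg : ∀ (i : Fin n) (j : Fin s), (i : ℕ) = (j : ℕ) → 0 ≤ S i j)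
    (hmono : ∀ (i i' : Fin n) (j j' : Fin s), (i : ℕ) = (j : ℕ) → (i' : ℕ) = (j' : ℕ) →
      (i : ℕ) ≤ (i' : ℕ) → S i' j' ≤ S i j)
    (r : ℕ) (hr : r < min n s) :
    ∀ B : Matrix (Fin n) (Fin s) ℝ, B.rank ≤ r →
      S ⟨r, by omega⟩ ⟨r, by omega⟩ ≤ ‖V - B‖ := by
  classical
  have hrn : r < n := lt_of_lt_of_le hr (min_le_left _ _)
  have hrs : r < s := lt_of_lt_of_le hr (min_le_right _ _)
  intro B hB
  set σ : ℝ := S ⟨r, by omega⟩ ⟨r, by omega⟩ with hσdef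
  have hσ0 : 0 ≤ σ := hnonneg _ _ rfl
  -- the extension-by-zero matrix
  set E : Matrix (Fin s) (Fin (r+1)) ℝ :=
    Matrix.of fun j k => if (j : ℕ) = (k : ℕ) then 1 else 0 with hE
  set L : (Fin (r+1) → ℝ) →ₗ[ℝ] (Fin n → ℝ) :=
    B.mulVecLin ∘ₗ (Yf.mulVecLin ∘ₗ E.mulVecLin) with hL
  -- L is not injective since rank B ≤ r < r + 1
  have hnotinj : ¬ Function.Injective L := by
    intro hinj
    have h1 : Module.finrank ℝ (LinearMap.range L) = r + 1 := by
      rw [LinearMap.finrank_range_of_inj hinj]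
      simp
    have h2 : Module.finrank ℝ (LinearMap.range L) ≤ B.rank :=
      Submodule.finrank_mono (LinearMap.range_comp_le_range _ _)
    rw [h1] at h2
    omega
  obtain ⟨c, hcmem, hc0⟩ := Submodule.exists_mem_ne_zero_of_ne_bot
    (p := LinearMap.ker L) (fun h => hnotinj (LinearMap.ker_eq_bot.mp h))
  -- the extended vector and corresponding kernel witness
  set f : ℕ → ℝ := fun m => if h : m < r + 1 then c ⟨m, h⟩ else 0 with hf
  set e : Fin s → ℝ := E *ᵥ c with he
  have hee : ∀ j : Fin s, e j = f (j : ℕ) := by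
    intro j
    simp only [he, hE, Matrix.mulVec, dotProduct, Matrix.of_apply]
    by_cases h : (j : ℕ) < r + 1
    · rw [Finset.sum_eq_single (⟨(j : ℕ), h⟩ : Fin (r+1))]
      · simp [hf, h, Nat.lt_succ_iff.mp h]
      · intro k _ hk
        have : (j : ℕ) ≠ (k : ℕ) := fun hh => hk (by ext; simp [← hh])
        simp [this]
      · simp
    · rw [Finset.sum_eq_zero, hf]
      · simp [h]
      · intro k _
        have : (j : ℕ) ≠ (k : ℕ) := by omega
        simp [this]
  set w : Fin s → ℝ := Yf *ᵥ e with hw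
  have hBw : B *ᵥ w = 0 := by
    have : L c = 0 := hcmem
    simpa [hL, hw, he] using this
  -- the vector e is nonzero
  obtain ⟨k, hk⟩ := Function.ne_iff.mp hc0
  have hek : e ⟨(k : ℕ), lt_of_lt_of_le k.isLt (by omega)⟩ ≠ 0 := by
    rw [hee]
    simpa [hf, k.isLt, Nat.lt_succ_iff.mp k.isLt] using hk
  -- (V - B) *ᵥ w = Uf *ᵥ (S *ᵥ e)
  have hVBw : (V - B) *ᵥ w = Uf *ᵥ (S *ᵥ e) := by
    rw [Matrix.sub_mulVec, hBw, sub_zero, hSVD, hw]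
    rw [Matrix.mulVec_mulVec, Matrix.mul_assoc, Matrix.mul_assoc, hYf, Matrix.mul_one,
      ← Matrix.mulVec_mulVec]
  -- diagonal action of S on e
  set g : Fin n → ℝ := fun i => if h : (i : ℕ) < s then S i ⟨(i : ℕ), h⟩ else 0 with hg
  have hSe : ∀ i : Fin n, (S *ᵥ e) i = g i * f (i : ℕ) := by
    intro i
    simp only [Matrix.mulVec, dotProduct]
    by_cases h : (i : ℕ) < s
    · rw [Finset.sum_eq_single (⟨(i : ℕ), h⟩ : Fin s)]
      · rw [hee]; simp [hg, h]
      · intro j _ hj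
        have : (i : ℕ) ≠ (j : ℕ) := fun hh => hj (by ext; simp [← hh])
        simp [hoff i j this]
      · simp
    · rw [Finset.sum_eq_zero]
      · have : f (i : ℕ) = 0 := by rw [hf]; simp; omega
        simp [hg, h, this]
      · intro j _
        have : (i : ℕ) ≠ (j : ℕ) := by omega
        simp [hoff i j this]
  -- sum comparison
  have hsum_e : ∑ j : Fin s, f (j : ℕ) ^ 2 = ∑ m ∈ Finset.range (r+1), f m ^ 2 := by
    rw [Fin.sum_univ_eq_sum_range (fun m => f m ^ 2) s]
    exact (Finset.sum_subset (Finset.range_subset_range.mpr (by omega))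
      (fun m _ hm => by simp [hf, by simpa using hm])).symm
  have hsum_d : ∑ i : Fin n, f (i : ℕ) ^ 2 = ∑ m ∈ Finset.range (r+1), f m ^ 2 := by
    rw [Fin.sum_univ_eq_sum_range (fun m => f m ^ 2) n]
    exact (Finset.sum_subset (Finset.range_subset_range.mpr (by omega))
      (fun m _ hm => by simp [hf, by simpa using hm])).symm
  have hterm : ∀ i : Fin n, σ ^ 2 * f (i : ℕ) ^ 2 ≤ (g i * f (i : ℕ)) ^ 2 := by
    intro i
    by_cases hfi : f (i : ℕ) = 0
    · simp [hfi]
    · have hir : (i : ℕ) < r + 1 := by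
        by_contra hh
        exact hfi (by rw [hf]; exact dif_neg hh)
      have his : (i : ℕ) < s := by omega
      have hgi : σ ≤ g i := by
        rw [hg]
        simp only [his, dif_pos]
        exact hmono i ⟨r, by omega⟩ ⟨(i : ℕ), his⟩ ⟨r, by omega⟩ rfl rfl (by simp; omega)
      rw [mul_pow]
      exact mul_le_mul_of_nonneg_right
        (pow_le_pow_left₀ hσ0 hgi 2) (sq_nonneg _)
  -- the key norm inequality: σ * ‖e‖ ≤ ‖S *ᵥ e‖
  have hkey : σ * ‖(EuclideanSpace.equiv (Fin s) ℝ).symm e‖ ≤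
      ‖(EuclideanSpace.equiv (Fin n) ℝ).symm (S *ᵥ e)‖ := by
    rw [EuclideanSpace.norm_eq, EuclideanSpace.norm_eq]
    simp only [show ∀ (k : ℕ) (v : Fin k → ℝ) (i : Fin k),
      (EuclideanSpace.equiv (Fin k) ℝ).symm v i = v i from fun _ _ _ => rfl]
    have h1 : σ * Real.sqrt (∑ j : Fin s, ‖e j‖ ^ 2) =
        Real.sqrt (σ ^ 2 * ∑ j : Fin s, f (j : ℕ) ^ 2) := by
      rw [Real.sqrt_mul (sq_nonneg σ), Real.sqrt_sq hσ0]
      congr 2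
      exact Finset.sum_congr rfl fun j _ => by rw [hee, Real.norm_eq_abs, sq_abs]
    rw [h1]
    apply Real.sqrt_le_sqrt
    calc σ ^ 2 * ∑ j : Fin s, f (j : ℕ) ^ 2
        = ∑ i : Fin n, σ ^ 2 * f (i : ℕ) ^ 2 := by
          rw [← Finset.mul_sum, hsum_e, ← hsum_d]
      _ ≤ ∑ i : Fin n, (g i * f (i : ℕ)) ^ 2 := Finset.sum_le_sum fun i _ => hterm i
      _ = ∑ i : Fin n, ‖(S *ᵥ e) i‖ ^ 2 := by
          exact Finset.sum_congr rfl fun i _ => by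
            rw [hSe, Real.norm_eq_abs, sq_abs]
  -- finish
  have hUfSe : ‖(EuclideanSpace.equiv (Fin n) ℝ).symm (S *ᵥ e)‖ =
      ‖(EuclideanSpace.equiv (Fin n) ℝ).symm ((V - B) *ᵥ w)‖ := by
    rw [hVBw, orth_mulVec_norm Uf hUf]
  have hwnorm : ‖(EuclideanSpace.equiv (Fin s) ℝ).symm w‖ =
      ‖(EuclideanSpace.equiv (Fin s) ℝ).symm e‖ := orth_mulVec_norm Yf hYf e
  have hop : ‖(EuclideanSpace.equiv (Fin n) ℝ).symm ((V - B) *ᵥ w)‖ ≤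
      ‖V - B‖ * ‖(EuclideanSpace.equiv (Fin s) ℝ).symm w‖ :=
    (V - B).l2_opNorm_mulVec ((EuclideanSpace.equiv (Fin s) ℝ).symm w)
  have hepos : 0 < ‖(EuclideanSpace.equiv (Fin s) ℝ).symm e‖ := by
    rw [norm_pos_iff]
    intro h
    exact hek (congrFun (congrArg (fun z => (EuclideanSpace.equiv (Fin s) ℝ) z)
      h) _)
  have hchain : σ * ‖(EuclideanSpace.equiv (Fin s) ℝ).symm e‖ ≤
      ‖V - B‖ * ‖(EuclideanSpace.equiv (Fin s) ℝ).symm e‖ := by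
    calc σ * ‖(EuclideanSpace.equiv (Fin s) ℝ).symm e‖
        ≤ ‖(EuclideanSpace.equiv (Fin n) ℝ).symm (S *ᵥ e)‖ := hkey
      _ = ‖(EuclideanSpace.equiv (Fin n) ℝ).symm ((V - B) *ᵥ w)‖ := hUfSe
      _ ≤ ‖V - B‖ * ‖(EuclideanSpace.equiv (Fin s) ℝ).symm w‖ := hop
      _ = ‖V - B‖ * ‖(EuclideanSpace.equiv (Fin s) ℝ).symm e‖ := by rw [hwnorm]
  exact le_of_mul_le_mul_right hchain hepos
end
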